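/- arXiv:2412.00798 — 10 statements merged into one kernel-verified Lean document; each statement's English description precedes it below -/
import Mathlib

section
/- For every combinatorial rising bandit instance and every horizon T, some constant policy is optimal: there exists a super arm S* ∈ 𝒮 such that the allocation assigning all T pulls to S* maximizes the expected cumulative reward, i.e. Σ_{i∈S*} Σ_{n=1}^{T} μ_i(n) ≥ J(f) for every allocation f : 𝒮 → ℕ with Σ_{S∈𝒮} f(S) = T. -/
open Finset

/-- Number of pulls of base arm `i` under the allocation `f` over the super-arm set `𝒮`:
`N_i(f) = Σ_{S ∈ 𝒮, i ∈ S} f(S)`. -/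
def pulls {K : ℕ} (𝒮 : Finset (Finset (Fin K))) (f : Finset (Fin K) → ℕ) (i : Fin K) : ℕ :=
  ∑ S ∈ 𝒮.filter (fun S => i ∈ S), f S

/-- Expected cumulative reward of the allocation `f`:
`J(f) = Σ_{i=1}^K Σ_{n=1}^{N_i(f)} μ_i(n)`. -/
noncomputable def cumReward {K : ℕ} (μ : Fin K → ℕ → ℝ) (𝒮 : Finset (Finset (Fin K)))
    (f : Finset (Fin K) → ℕ) : ℝ :=
  ∑ i : Fin K, ∑ n ∈ Finset.Icc 1 (pulls 𝒮 f i), μ i n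

/-- Key convexity bound: for a nonneg nondecreasing `g`, with `A N = ∑_{n=1}^N g n`,
if `N ≤ T` then `T * A N ≤ N * A T`. -/
lemma key_convexity (g : ℕ → ℝ) (h0 : ∀ n, 0 ≤ g n) (hmono : Monotone g)
    {N T : ℕ} (hNT : N ≤ T) :
    (T : ℝ) * ∑ n ∈ Finset.Icc 1 N, g n ≤ (N : ℝ) * ∑ n ∈ Finset.Icc 1 T, g n := by
  have hsplit : ∑ n ∈ Finset.Icc 1 T, g n
      = (∑ n ∈ Finset.Icc 1 N, g n) + ∑ n ∈ Finset.Ioc N T, g n := by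
    have h : ∀ m, Finset.Icc 1 m = Finset.Ioc 0 m := fun m => by
      rw [← Finset.Icc_add_one_left_eq_Ioc, zero_add]
    rw [h, h, ← Finset.sum_Ioc_consecutive _ (Nat.zero_le N) hNT]
  have hb1 : ∑ n ∈ Finset.Icc 1 N, g n ≤ (N : ℝ) * g (N + 1) := by
    calc ∑ n ∈ Finset.Icc 1 N, g n ≤ (Finset.Icc 1 N).card • g (N + 1) := by
          apply Finset.sum_le_card_nsmul
          intro n hn
          exact hmono (Nat.le_succ_of_le (Finset.mem_Icc.mp hn).2)
      _ = (N : ℝ) * g (N + 1) := by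
          rw [Nat.card_Icc]; simp [nsmul_eq_mul]
  have hb2 : ((T : ℝ) - N) * g (N + 1) ≤ ∑ n ∈ Finset.Ioc N T, g n := by
    calc ((T : ℝ) - N) * g (N + 1) = (Finset.Ioc N T).card • g (N + 1) := by
          rw [Nat.card_Ioc, nsmul_eq_mul, Nat.cast_sub hNT]
      _ ≤ ∑ n ∈ Finset.Ioc N T, g n := by
          apply Finset.card_nsmul_le_sum
          intro n hn
          exact hmono (Finset.mem_Ioc.mp hn).1
  have hcast : (N : ℝ) ≤ (T : ℝ) := Nat.cast_le.mpr hNT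
  have hN0 : (0 : ℝ) ≤ (N : ℝ) := Nat.cast_nonneg N
  nlinarith [mul_le_mul_of_nonneg_left hb1 (by linarith : (0:ℝ) ≤ (T:ℝ) - N),
    mul_le_mul_of_nonneg_left hb2 hN0]

/-- For every combinatorial rising bandit instance and every horizon `T`, some constant policy
is optimal: there is a super arm `Sstar ∈ 𝒮` such that allocating all `T` pulls to `Sstar`
maximizes the expected cumulative reward over all allocations. -/
theorem exists_constant_optimal_policy
    (K : ℕ) (μ : Fin K → ℕ → ℝ) (𝒮 : Finset (Finset (Fin K))) (T : ℕ)
    (h𝒮 : 𝒮.Nonempty)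
    (h0 : ∀ i n, 0 ≤ μ i n) (h1 : ∀ i n, μ i n ≤ 1)
    (hmono : ∀ i, Monotone (μ i))
    (hconc : ∀ i n, μ i (n + 2) - μ i (n + 1) ≤ μ i (n + 1) - μ i n) :
    ∃ Sstar ∈ 𝒮, ∀ f : Finset (Fin K) → ℕ, (∑ S ∈ 𝒮, f S) = T →
      cumReward μ 𝒮 f ≤ ∑ i ∈ Sstar, ∑ n ∈ Finset.Icc 1 T, μ i n := by
  classical
  set V : Finset (Fin K) → ℝ := fun S => ∑ i ∈ S, ∑ n ∈ Finset.Icc 1 T, μ i n with hV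
  obtain ⟨Sstar, hSmem, hSmax⟩ := Finset.exists_max_image 𝒮 V h𝒮
  refine ⟨Sstar, hSmem, ?_⟩
  intro f hT
  have hpulls_le : ∀ i, pulls 𝒮 f i ≤ T := by
    intro i
    rw [← hT]
    exact Finset.sum_le_sum_of_subset (Finset.filter_subset _ _)
  rcases Nat.eq_zero_or_pos T with hT0 | hTpos
  · have hp0 : ∀ i, pulls 𝒮 f i = 0 := fun i => Nat.le_zero.mp (hT0 ▸ hpulls_le i)
    have : cumReward μ 𝒮 f = 0 := by
      unfold cumReward
      simp [hp0]
    rw [this, hT0]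
    simp
  · have hTpos' : (0 : ℝ) < T := Nat.cast_pos.mpr hTpos
    rw [← mul_le_mul_iff_right₀ hTpos']
    calc (T : ℝ) * cumReward μ 𝒮 f
        = ∑ i : Fin K, (T : ℝ) * ∑ n ∈ Finset.Icc 1 (pulls 𝒮 f i), μ i n := by
          rw [cumReward, Finset.mul_sum]
      _ ≤ ∑ i : Fin K, (pulls 𝒮 f i : ℝ) * ∑ n ∈ Finset.Icc 1 T, μ i n := by
          apply Finset.sum_le_sum
          intro i _
          exact key_convexity (μ i) (h0 i) (hmono i) (hpulls_le i)
      _ = ∑ i : Fin K, ∑ S ∈ 𝒮, (if i ∈ S then (f S : ℝ) * ∑ n ∈ Finset.Icc 1 T, μ i n else 0) := by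
          apply Finset.sum_congr rfl
          intro i _
          rw [pulls, Nat.cast_sum, Finset.sum_mul, Finset.sum_filter]
      _ = ∑ S ∈ 𝒮, (f S : ℝ) * V S := by
          rw [Finset.sum_comm]
          apply Finset.sum_congr rfl
          intro S _
          rw [hV, Finset.mul_sum]
          rw [← Finset.sum_filter]
          apply Finset.sum_congr ?_ (fun _ _ => rfl)
          simp [Finset.filter_mem_eq_inter]
      _ ≤ ∑ S ∈ 𝒮, (f S : ℝ) * V Sstar := by
          apply Finset.sum_le_sum
          intro S hS
          exact mul_le_mul_of_nonneg_left (hSmax S hS) (Nat.cast_nonneg _)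
      _ = (T : ℝ) * V Sstar := by
          rw [← Finset.sum_mul, ← Nat.cast_sum, hT]
end

section
/- Let f* be an optimal allocation over horizon T and let S₁, S₂ ∈ 𝒮 with f*(S₁) ≥ 1. Then the single-pull exchange from S₁ to S₂ does not improve the reward: Σ_{i∈S₁\S₂} μ_i(N_i(f*)) ≥ Σ_{i∈S₂\S₁} μ_i(N_i(f*)+1). -/
open Finset

/-- If `fstar` is an optimal allocation and `fstar S₁ ≥ 1`, the single-pull exchange from
`S₁` to `S₂` does not improve the reward:
`Σ_{i∈S₁\S₂} μ_i(N_i(f*)) ≥ Σ_{i∈S₂\S₁} μ_i(N_i(f*)+1)`. -/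
theorem single_pull_exchange_no_gain
    (K : ℕ) (μ : Fin K → ℕ → ℝ) (𝒮 : Finset (Finset (Fin K))) (T : ℕ)
    (h𝒮 : 𝒮.Nonempty)
    (h0 : ∀ i n, 0 ≤ μ i n) (h1 : ∀ i n, μ i n ≤ 1)
    (hmono : ∀ i, Monotone (μ i))
    (hconc : ∀ i n, μ i (n + 2) - μ i (n + 1) ≤ μ i (n + 1) - μ i n)
    (fstar : Finset (Fin K) → ℕ)
    (hsum : (∑ S ∈ 𝒮, fstar S) = T)
    (hopt : ∀ f : Finset (Fin K) → ℕ, (∑ S ∈ 𝒮, f S) = T →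
      cumReward μ 𝒮 f ≤ cumReward μ 𝒮 fstar)
    (S₁ S₂ : Finset (Fin K)) (hS₁ : S₁ ∈ 𝒮) (hS₂ : S₂ ∈ 𝒮)
    (hpos : 1 ≤ fstar S₁) :
    ∑ i ∈ S₂ \ S₁, μ i (pulls 𝒮 fstar i + 1) ≤ ∑ i ∈ S₁ \ S₂, μ i (pulls 𝒮 fstar i) := by
  classical
  by_cases hne : S₁ = S₂
  · subst hne; simp
  set f : Finset (Fin K) → ℕ :=
    fun S => if S = S₁ then fstar S₁ - 1 else if S = S₂ then fstar S₂ + 1 else fstar S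
    with hfdef
  have hne' : S₂ ≠ S₁ := fun h => hne h.symm
  have hpt : ∀ S, f S + (if S = S₁ then 1 else 0) = fstar S + (if S = S₂ then 1 else 0) := by
    intro S
    by_cases h1 : S = S₁
    · rw [h1]
      have hf1 : f S₁ = fstar S₁ - 1 := if_pos rfl
      rw [hf1, if_pos rfl, if_neg hne]
      omega
    · by_cases h2 : S = S₂ <;> simp [hfdef, h1, h2, hne']
  have key : ∀ A : Finset (Finset (Fin K)),
      ∑ S ∈ A, f S + (if S₁ ∈ A then 1 else 0)
        = ∑ S ∈ A, fstar S + (if S₂ ∈ A then 1 else 0) := by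
    intro A
    have h := Finset.sum_congr rfl (fun S (_ : S ∈ A) => hpt S)
    have e1 : ∑ S ∈ A, (if S = S₁ then 1 else 0) = (if S₁ ∈ A then 1 else 0) :=
      Finset.sum_ite_eq' A S₁ (fun _ => 1)
    have e2 : ∑ S ∈ A, (if S = S₂ then 1 else 0) = (if S₂ ∈ A then 1 else 0) :=
      Finset.sum_ite_eq' A S₂ (fun _ => 1)
    rw [Finset.sum_add_distrib, Finset.sum_add_distrib, e1, e2] at h
    exact h
  have hsumf : ∑ S ∈ 𝒮, f S = T := by
    have := key 𝒮
    simp [hS₁, hS₂] at this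
    omega
  have hp : ∀ i, pulls 𝒮 f i + (if i ∈ S₁ then 1 else 0)
      = pulls 𝒮 fstar i + (if i ∈ S₂ then 1 else 0) := by
    intro i
    have := key (𝒮.filter (fun S => i ∈ S))
    simpa [pulls, Finset.mem_filter, hS₁, hS₂] using this
  have hNpos : ∀ i, i ∈ S₁ → 1 ≤ pulls 𝒮 fstar i := by
    intro i hi
    have hmem : S₁ ∈ 𝒮.filter (fun S => i ∈ S) := Finset.mem_filter.mpr ⟨hS₁, hi⟩
    exact le_trans hpos (Finset.single_le_sum (fun _ _ => Nat.zero_le _) hmem)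
  have hpoint : ∀ i : Fin K,
      (∑ n ∈ Finset.Icc 1 (pulls 𝒮 f i), μ i n)
        = (∑ n ∈ Finset.Icc 1 (pulls 𝒮 fstar i), μ i n)
          + (if i ∈ S₂ \ S₁ then μ i (pulls 𝒮 fstar i + 1) else 0)
          - (if i ∈ S₁ \ S₂ then μ i (pulls 𝒮 fstar i) else 0) := by
    intro i
    by_cases h1 : i ∈ S₁ <;> by_cases h2 : i ∈ S₂
    · have hM : pulls 𝒮 f i = pulls 𝒮 fstar i := by have := hp i; simp [h1, h2] at this; omega
      simp [hM, h1, h2]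
    · -- i ∈ S₁ \ S₂ : pulls f i + 1 = pulls fstar i
      have hM : pulls 𝒮 f i + 1 = pulls 𝒮 fstar i := by
        have := hp i; simp [h1, h2] at this; omega
      have hs : ∑ n ∈ Finset.Icc 1 (pulls 𝒮 f i + 1), μ i n
          = (∑ n ∈ Finset.Icc 1 (pulls 𝒮 f i), μ i n) + μ i (pulls 𝒮 f i + 1) :=
        Finset.sum_Icc_succ_top (by omega) _
      rw [hM] at hs
      simp only [Finset.mem_sdiff, h1, h2, not_true, not_false_iff, and_true, and_false,
        false_and, if_false, if_true]
      linarith [hs]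
    · -- i ∈ S₂ \ S₁ : pulls f i = pulls fstar i + 1
      have hM : pulls 𝒮 f i = pulls 𝒮 fstar i + 1 := by
        have := hp i; simp [h1, h2] at this; omega
      have hs : ∑ n ∈ Finset.Icc 1 (pulls 𝒮 fstar i + 1), μ i n
          = (∑ n ∈ Finset.Icc 1 (pulls 𝒮 fstar i), μ i n) + μ i (pulls 𝒮 fstar i + 1) :=
        Finset.sum_Icc_succ_top (by omega) _
      rw [hM, hs]
      simp only [Finset.mem_sdiff, h1, h2, not_true, not_false_iff, and_true, and_false,
        false_and, if_false, if_true]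
      ring
    · have hM : pulls 𝒮 f i = pulls 𝒮 fstar i := by have := hp i; simp [h1, h2] at this; omega
      simp [hM, h1, h2]
  have hcum : cumReward μ 𝒮 f
      = cumReward μ 𝒮 fstar
        + (∑ i ∈ S₂ \ S₁, μ i (pulls 𝒮 fstar i + 1))
        - (∑ i ∈ S₁ \ S₂, μ i (pulls 𝒮 fstar i)) := by
    have hA : ∑ i : Fin K, (if i ∈ S₂ \ S₁ then μ i (pulls 𝒮 fstar i + 1) else 0)
        = ∑ i ∈ S₂ \ S₁, μ i (pulls 𝒮 fstar i + 1) := by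
      rw [Finset.sum_ite_mem, Finset.univ_inter]
    have hB : ∑ i : Fin K, (if i ∈ S₁ \ S₂ then μ i (pulls 𝒮 fstar i) else 0)
        = ∑ i ∈ S₁ \ S₂, μ i (pulls 𝒮 fstar i) := by
      rw [Finset.sum_ite_mem, Finset.univ_inter]
    unfold cumReward
    rw [Finset.sum_congr rfl (fun i _ => hpoint i)]
    rw [Finset.sum_sub_distrib, Finset.sum_add_distrib, hA, hB]
  have hle := hopt f hsumf
  rw [hcum] at hle
  linarith
end

section
/- (Claim 1) Let f* be an optimal allocation over horizon T and let S₁, S₂ ∈ 𝒮 with f*(S₁) ≥ 1 and f*(S₂) ≥ 1. Then the terminal per-round rewards of the two selected super arms coincide: Σ_{i∈S₁\S₂} μ_i(N_i(f*)) = Σ_{i∈S₂\S₁} μ_i(N_i(f*)), and consequently Σ_{i∈S₁} μ_i(N_i(f*)) = Σ_{i∈S₂} μ_i(N_i(f*)). -/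
open Finset

lemma key_sum {K : ℕ} (fstar : Finset (Fin K) → ℕ) (S₁ S₂ : Finset (Fin K))
    (hne : S₁ ≠ S₂) (hpos : 1 ≤ fstar S₁) (F : Finset (Finset (Fin K))) :
    (∑ S ∈ F, (if S = S₁ then fstar S - 1 else if S = S₂ then fstar S + 1 else fstar S))
      + (if S₁ ∈ F then 1 else 0)
    = (∑ S ∈ F, fstar S) + (if S₂ ∈ F then 1 else 0) := by
  have h : ∀ S, (if S = S₁ then fstar S - 1 else if S = S₂ then fstar S + 1 else fstar S)
      + (if S = S₁ then 1 else 0) = fstar S + (if S = S₂ then 1 else 0) := by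
    intro S
    by_cases h1 : S = S₁
    · subst h1
      rw [if_pos rfl, if_pos rfl, if_neg hne]
      omega
    · rw [if_neg h1, if_neg h1]
      by_cases h2 : S = S₂ <;> simp [h2]
  calc (∑ S ∈ F, (if S = S₁ then fstar S - 1 else if S = S₂ then fstar S + 1 else fstar S))
        + (if S₁ ∈ F then 1 else 0)
      = ∑ S ∈ F, ((if S = S₁ then fstar S - 1 else if S = S₂ then fstar S + 1 else fstar S)
          + (if S = S₁ then 1 else 0)) := by
        rw [Finset.sum_add_distrib, Finset.sum_ite_eq' F S₁ (fun _ => 1)]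
    _ = ∑ S ∈ F, (fstar S + (if S = S₂ then 1 else 0)) := Finset.sum_congr rfl (fun S _ => h S)
    _ = (∑ S ∈ F, fstar S) + (if S₂ ∈ F then 1 else 0) := by
        rw [Finset.sum_add_distrib, Finset.sum_ite_eq' F S₂ (fun _ => 1)]

lemma exchange {K : ℕ} (μ : Fin K → ℕ → ℝ) (𝒮 : Finset (Finset (Fin K))) (T : ℕ)
    (fstar : Finset (Fin K) → ℕ)
    (hopt : ∀ f : Finset (Fin K) → ℕ, (∑ S ∈ 𝒮, f S) = T →
      cumReward μ 𝒮 f ≤ cumReward μ 𝒮 fstar)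
    (hsum : (∑ S ∈ 𝒮, fstar S) = T)
    (S₁ S₂ : Finset (Fin K)) (hS₁ : S₁ ∈ 𝒮) (hS₂ : S₂ ∈ 𝒮) (hne : S₁ ≠ S₂)
    (hpos : 1 ≤ fstar S₁) :
    (∑ i ∈ S₂ \ S₁, μ i (pulls 𝒮 fstar i + 1)) ≤ ∑ i ∈ S₁ \ S₂, μ i (pulls 𝒮 fstar i) := by
  set f : Finset (Fin K) → ℕ :=
    fun S => if S = S₁ then fstar S - 1 else if S = S₂ then fstar S + 1 else fstar S with hf
  have hfs : (∑ S ∈ 𝒮, f S) = T := by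
    have h := key_sum fstar S₁ S₂ hne hpos 𝒮
    rw [← hf] at h
    simp only [hS₁, hS₂, if_pos] at h
    show 𝒮.sum f = T
    omega
  have hp : ∀ i, pulls 𝒮 f i + (if i ∈ S₁ then 1 else 0)
      = pulls 𝒮 fstar i + (if i ∈ S₂ then 1 else 0) := by
    intro i
    have h := key_sum fstar S₁ S₂ hne hpos (𝒮.filter (fun S => i ∈ S))
    rw [← hf] at h
    simpa [pulls, Finset.mem_filter, hS₁, hS₂] using h
  have hi : ∀ i, (∑ n ∈ Finset.Icc 1 (pulls 𝒮 f i), μ i n)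
      = (∑ n ∈ Finset.Icc 1 (pulls 𝒮 fstar i), μ i n)
        + (if i ∈ S₂ \ S₁ then μ i (pulls 𝒮 fstar i + 1) else 0)
        - (if i ∈ S₁ \ S₂ then μ i (pulls 𝒮 fstar i) else 0) := by
    intro i
    have hpi := hp i
    by_cases h1 : i ∈ S₁ <;> by_cases h2 : i ∈ S₂
    · have : pulls 𝒮 f i = pulls 𝒮 fstar i := by simp [h1, h2] at hpi; omega
      simp [this, h1, h2]
    · have hN : pulls 𝒮 fstar i = pulls 𝒮 f i + 1 := by simp [h1, h2] at hpi; omega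
      have hsucc : (∑ n ∈ Finset.Icc 1 (pulls 𝒮 f i + 1), μ i n)
          = (∑ n ∈ Finset.Icc 1 (pulls 𝒮 f i), μ i n) + μ i (pulls 𝒮 f i + 1) :=
        Finset.sum_Icc_succ_top (Nat.succ_le_succ (Nat.zero_le _)) _
      simp only [hN, h1, h2, Finset.mem_sdiff, not_true, not_false_iff, and_true, and_false,
        if_true, if_false, hsucc]
      ring
    · have hN : pulls 𝒮 f i = pulls 𝒮 fstar i + 1 := by simp [h1, h2] at hpi; omega
      have hsucc : (∑ n ∈ Finset.Icc 1 (pulls 𝒮 fstar i + 1), μ i n)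
          = (∑ n ∈ Finset.Icc 1 (pulls 𝒮 fstar i), μ i n) + μ i (pulls 𝒮 fstar i + 1) :=
        Finset.sum_Icc_succ_top (Nat.succ_le_succ (Nat.zero_le _)) _
      simp only [hN, h1, h2, Finset.mem_sdiff, not_true, not_false_iff, and_true, and_false,
        if_true, if_false, hsucc]
      ring
    · have : pulls 𝒮 f i = pulls 𝒮 fstar i := by simp [h1, h2] at hpi; omega
      simp [this, h1, h2]
  have hcr : cumReward μ 𝒮 f = cumReward μ 𝒮 fstar
      + (∑ i ∈ S₂ \ S₁, μ i (pulls 𝒮 fstar i + 1))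
      - (∑ i ∈ S₁ \ S₂, μ i (pulls 𝒮 fstar i)) := by
    unfold cumReward
    rw [Finset.sum_congr rfl (fun i _ => hi i)]
    rw [Finset.sum_sub_distrib, Finset.sum_add_distrib]
    rw [Finset.sum_ite_mem Finset.univ (S₂ \ S₁), Finset.sum_ite_mem Finset.univ (S₁ \ S₂),
      Finset.univ_inter, Finset.univ_inter]
  have hle := hopt f hfs
  linarith

/-- (Claim 1) If `fstar` is an optimal allocation that pulls both `S₁` and `S₂` at least once,
then the terminal per-round rewards of the two selected super arms coincide. -/
theorem claim1_terminal_rewards_coincide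
    (K : ℕ) (μ : Fin K → ℕ → ℝ) (𝒮 : Finset (Finset (Fin K))) (T : ℕ)
    (h𝒮 : 𝒮.Nonempty)
    (h0 : ∀ i n, 0 ≤ μ i n) (h1 : ∀ i n, μ i n ≤ 1)
    (hmono : ∀ i, Monotone (μ i))
    (hconc : ∀ i n, μ i (n + 2) - μ i (n + 1) ≤ μ i (n + 1) - μ i n)
    (fstar : Finset (Fin K) → ℕ)
    (hsum : (∑ S ∈ 𝒮, fstar S) = T)
    (hopt : ∀ f : Finset (Fin K) → ℕ, (∑ S ∈ 𝒮, f S) = T →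
      cumReward μ 𝒮 f ≤ cumReward μ 𝒮 fstar)
    (S₁ S₂ : Finset (Fin K)) (hS₁ : S₁ ∈ 𝒮) (hS₂ : S₂ ∈ 𝒮)
    (hpos₁ : 1 ≤ fstar S₁) (hpos₂ : 1 ≤ fstar S₂) :
    (∑ i ∈ S₁ \ S₂, μ i (pulls 𝒮 fstar i)) = (∑ i ∈ S₂ \ S₁, μ i (pulls 𝒮 fstar i)) ∧
    (∑ i ∈ S₁, μ i (pulls 𝒮 fstar i)) = (∑ i ∈ S₂, μ i (pulls 𝒮 fstar i)) := by
  by_cases hne : S₁ = S₂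
  · subst hne; simp
  · have I1 := exchange μ 𝒮 T fstar hopt hsum S₁ S₂ hS₁ hS₂ hne hpos₁
    have I2 := exchange μ 𝒮 T fstar hopt hsum S₂ S₁ hS₂ hS₁ (Ne.symm hne) hpos₂
    have M1 : (∑ i ∈ S₁ \ S₂, μ i (pulls 𝒮 fstar i))
        ≤ ∑ i ∈ S₁ \ S₂, μ i (pulls 𝒮 fstar i + 1) :=
      Finset.sum_le_sum (fun i _ => hmono i (Nat.le_succ _))
    have M2 : (∑ i ∈ S₂ \ S₁, μ i (pulls 𝒮 fstar i))
        ≤ ∑ i ∈ S₂ \ S₁, μ i (pulls 𝒮 fstar i + 1) :=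
      Finset.sum_le_sum (fun i _ => hmono i (Nat.le_succ _))
    have heq : (∑ i ∈ S₁ \ S₂, μ i (pulls 𝒮 fstar i))
        = ∑ i ∈ S₂ \ S₁, μ i (pulls 𝒮 fstar i) := by linarith
    refine ⟨heq, ?_⟩
    have h1' := Finset.sum_inter_add_sum_sdiff S₁ S₂ (fun i => μ i (pulls 𝒮 fstar i))
    have h2' := Finset.sum_inter_add_sum_sdiff S₂ S₁ (fun i => μ i (pulls 𝒮 fstar i))
    rw [Finset.inter_comm] at h2'
    linarith
end

section
/- (Claim 2) Let f* be an optimal allocation over horizon T and let S₁, S₂ ∈ 𝒮 be distinct with f*(S₁) ≥ 1 and f*(S₂) ≥ 1. Then the rewards of the base arms in S₁ \ S₂ are flat over the last f*(S₁) pulls: Σ_{i∈S₁\S₂} μ_i(N_i(f*) − f*(S₁) + 1) = Σ_{i∈S₁\S₂} μ_i(N_i(f*)). -/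
open Finset

/-- Move `d` pulls from super arm `A` to super arm `B`. -/
def tw {K : ℕ} (f : Finset (Fin K) → ℕ) (A B : Finset (Fin K)) (d : ℕ)
    (S : Finset (Fin K)) : ℕ :=
  if S = A then f S - d else if S = B then f S + d else f S

lemma tw_add {K : ℕ} (f : Finset (Fin K) → ℕ) (A B : Finset (Fin K)) (hAB : A ≠ B)
    (d : ℕ) (hd : d ≤ f A) (S : Finset (Fin K)) :
    tw f A B d S + (if S = A then d else 0) = f S + (if S = B then d else 0) := by
  unfold tw
  by_cases h1 : S = A
  · subst h1; simp [hAB]; omega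
  · by_cases h2 : S = B <;> simp [h1, h2, Ne.symm hAB]

lemma sum_tw {K : ℕ} (f : Finset (Fin K) → ℕ) (A B : Finset (Fin K)) (hAB : A ≠ B)
    (d : ℕ) (hd : d ≤ f A) (s : Finset (Finset (Fin K))) :
    ∑ S ∈ s, tw f A B d S + (if A ∈ s then d else 0)
      = ∑ S ∈ s, f S + (if B ∈ s then d else 0) := by
  have h1 : ∑ S ∈ s, (tw f A B d S + (if S = A then d else 0))
      = ∑ S ∈ s, (f S + (if S = B then d else 0)) :=
    Finset.sum_congr rfl (fun S _ => tw_add f A B hAB d hd S)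
  simpa [Finset.sum_add_distrib, Finset.sum_ite_eq' s] using h1

lemma pulls_tw {K : ℕ} (𝒮 : Finset (Finset (Fin K))) (f : Finset (Fin K) → ℕ)
    (A B : Finset (Fin K)) (hA : A ∈ 𝒮) (hB : B ∈ 𝒮) (hAB : A ≠ B)
    (d : ℕ) (hd : d ≤ f A) (i : Fin K) :
    pulls 𝒮 (tw f A B d) i + (if i ∈ A then d else 0)
      = pulls 𝒮 f i + (if i ∈ B then d else 0) := by
  have h := sum_tw f A B hAB d hd (𝒮.filter (fun S => i ∈ S))
  simpa [pulls, Finset.mem_filter, hA, hB] using h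

lemma le_pulls {K : ℕ} (𝒮 : Finset (Finset (Fin K))) (f : Finset (Fin K) → ℕ)
    (S : Finset (Fin K)) (hS : S ∈ 𝒮) (i : Fin K) (hi : i ∈ S) :
    f S ≤ pulls 𝒮 f i :=
  Finset.single_le_sum (fun _ _ => Nat.zero_le _) (Finset.mem_filter.mpr ⟨hS, hi⟩)

lemma sum_univ_split {K : ℕ} (t : Fin K → ℝ) (A B : Finset (Fin K)) (hd : Disjoint A B)
    (h0 : ∀ i, i ∉ A → i ∉ B → t i = 0) :
    ∑ i : Fin K, t i = ∑ i ∈ A, t i + ∑ i ∈ B, t i := by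
  rw [← Finset.sum_union hd]
  exact (Finset.sum_subset (Finset.subset_univ _) (fun i _ hi =>
    h0 i (fun h => hi (Finset.mem_union_left _ h))
      (fun h => hi (Finset.mem_union_right _ h)))).symm

lemma G_diff (μ : ℕ → ℝ) (m n : ℕ) (h : m ≤ n) :
    (∑ k ∈ Finset.Icc 1 n, μ k) - (∑ k ∈ Finset.Icc 1 m, μ k)
      = ∑ k ∈ Finset.Ioc m n, μ k := by
  rw [show Finset.Icc 1 n = Finset.Ioc 0 n from Finset.Icc_add_one_left_eq_Ioc 0 n,
      show Finset.Icc 1 m = Finset.Ioc 0 m from Finset.Icc_add_one_left_eq_Ioc 0 m,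
      ← Finset.sum_Ioc_consecutive μ (Nat.zero_le m) h]
  ring

/-- (Claim 2) If `fstar` is an optimal allocation that pulls the distinct super arms `S₁` and
`S₂` at least once each, then the rewards of the base arms in `S₁ \ S₂` are flat over the last
`fstar S₁` pulls. -/
theorem claim2_rewards_flat
    (K : ℕ) (μ : Fin K → ℕ → ℝ) (𝒮 : Finset (Finset (Fin K))) (T : ℕ)
    (h𝒮 : 𝒮.Nonempty)
    (h0 : ∀ i n, 0 ≤ μ i n) (h1 : ∀ i n, μ i n ≤ 1)
    (hmono : ∀ i, Monotone (μ i))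
    (hconc : ∀ i n, μ i (n + 2) - μ i (n + 1) ≤ μ i (n + 1) - μ i n)
    (fstar : Finset (Fin K) → ℕ)
    (hsum : (∑ S ∈ 𝒮, fstar S) = T)
    (hopt : ∀ f : Finset (Fin K) → ℕ, (∑ S ∈ 𝒮, f S) = T →
      cumReward μ 𝒮 f ≤ cumReward μ 𝒮 fstar)
    (S₁ S₂ : Finset (Fin K)) (hS₁ : S₁ ∈ 𝒮) (hS₂ : S₂ ∈ 𝒮)
    (hne : S₁ ≠ S₂) (hpos₁ : 1 ≤ fstar S₁) (hpos₂ : 1 ≤ fstar S₂) :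
    (∑ i ∈ S₁ \ S₂, μ i (pulls 𝒮 fstar i - fstar S₁ + 1)) =
      ∑ i ∈ S₁ \ S₂, μ i (pulls 𝒮 fstar i) := by
  classical
  set N : Fin K → ℕ := pulls 𝒮 fstar with hNdef
  set c : ℕ := fstar S₁ with hcdef
  have hNc : ∀ i ∈ S₁, c ≤ N i := fun i hi => le_pulls 𝒮 fstar S₁ hS₁ i hi
  have hN1 : ∀ i ∈ S₂, 1 ≤ N i := fun i hi =>
    le_trans hpos₂ (le_pulls 𝒮 fstar S₂ hS₂ i hi)
  -- the two deviations
  set g : Finset (Fin K) → ℕ := tw fstar S₁ S₂ c with hgdef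
  set h : Finset (Fin K) → ℕ := tw fstar S₂ S₁ 1 with hhdef
  have hgsum : (∑ S ∈ 𝒮, g S) = T := by
    have h' := sum_tw fstar S₁ S₂ hne c le_rfl 𝒮
    rw [← hgdef] at h'
    simp only [if_pos hS₁, if_pos hS₂] at h'
    omega
  have hhsum : (∑ S ∈ 𝒮, h S) = T := by
    have h' := sum_tw fstar S₂ S₁ (Ne.symm hne) 1 hpos₂ 𝒮
    rw [← hhdef] at h'
    simp only [if_pos hS₁, if_pos hS₂] at h'
    omega
  have hPg : ∀ i, pulls 𝒮 g i + (if i ∈ S₁ then c else 0)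
      = N i + (if i ∈ S₂ then c else 0) :=
    fun i => pulls_tw 𝒮 fstar S₁ S₂ hS₁ hS₂ hne c le_rfl i
  have hPh : ∀ i, pulls 𝒮 h i + (if i ∈ S₂ then 1 else 0)
      = N i + (if i ∈ S₁ then 1 else 0) :=
    fun i => pulls_tw 𝒮 fstar S₂ S₁ hS₂ hS₁ (Ne.symm hne) 1 hpos₂ i
  -- Inequality (II): ∑_{A} μ i (N i + 1) ≤ ∑_{B} μ i (N i)
  have hII : (∑ i ∈ S₁ \ S₂, μ i (N i + 1)) ≤ ∑ i ∈ S₂ \ S₁, μ i (N i) := by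
    have hle := hopt h hhsum
    unfold cumReward at hle
    have key : (0:ℝ) ≤ ∑ i : Fin K,
        ((∑ n ∈ Finset.Icc 1 (N i), μ i n) - ∑ n ∈ Finset.Icc 1 (pulls 𝒮 h i), μ i n) := by
      rw [Finset.sum_sub_distrib]
      linarith
    rw [sum_univ_split _ (S₁ \ S₂) (S₂ \ S₁) (disjoint_sdiff_sdiff)
      (by
        intro i hiA hiB
        simp only [Finset.mem_sdiff, not_and, not_not] at hiA hiB
        have hp := hPh i
        have : pulls 𝒮 h i = N i := by
          by_cases h1' : i ∈ S₁ <;> by_cases h2' : i ∈ S₂ <;>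
            simp [h1', h2'] at hp ⊢ <;> tauto
        rw [this]; ring)] at key
    have hA' : ∀ i ∈ S₁ \ S₂,
        ((∑ n ∈ Finset.Icc 1 (N i), μ i n) - ∑ n ∈ Finset.Icc 1 (pulls 𝒮 h i), μ i n)
          = -(μ i (N i + 1)) := by
      intro i hi
      simp only [Finset.mem_sdiff] at hi
      have hp := hPh i
      rw [if_pos hi.1, if_neg hi.2, add_zero] at hp
      have hPi : pulls 𝒮 h i = N i + 1 := hp
      rw [hPi, ← neg_sub, G_diff (μ i) (N i) (N i + 1) (Nat.le_succ _),
        Nat.Ioc_succ_singleton, Finset.sum_singleton]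
    have hB' : ∀ i ∈ S₂ \ S₁,
        ((∑ n ∈ Finset.Icc 1 (N i), μ i n) - ∑ n ∈ Finset.Icc 1 (pulls 𝒮 h i), μ i n)
          = μ i (N i) := by
      intro i hi
      simp only [Finset.mem_sdiff] at hi
      have hp := hPh i
      rw [if_pos hi.1, if_neg hi.2, add_zero] at hp
      have hN1i : 1 ≤ N i := hN1 i hi.1
      have hPi : pulls 𝒮 h i = N i - 1 := by omega
      rw [hPi, G_diff (μ i) (N i - 1) (N i) (Nat.sub_le _ _),
        show Finset.Ioc (N i - 1) (N i) = {N i} from by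
          ext x; simp only [Finset.mem_Ioc, Finset.mem_singleton]; omega, Finset.sum_singleton]
    rw [Finset.sum_congr rfl hA', Finset.sum_congr rfl hB', Finset.sum_neg_distrib] at key
    linarith
  -- Inequality (I'): c * ∑_B μ(N) ≤ ∑_A μ(N-c+1) + (c-1) * ∑_A μ(N)
  have hI : (c : ℝ) * (∑ i ∈ S₂ \ S₁, μ i (N i))
      ≤ (∑ i ∈ S₁ \ S₂, μ i (N i - c + 1)) + ((c - 1 : ℕ) : ℝ) * ∑ i ∈ S₁ \ S₂, μ i (N i) := by
    have hle := hopt g hgsum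
    unfold cumReward at hle
    have key : (0:ℝ) ≤ ∑ i : Fin K,
        ((∑ n ∈ Finset.Icc 1 (N i), μ i n) - ∑ n ∈ Finset.Icc 1 (pulls 𝒮 g i), μ i n) := by
      rw [Finset.sum_sub_distrib]
      linarith
    rw [sum_univ_split _ (S₁ \ S₂) (S₂ \ S₁) (disjoint_sdiff_sdiff)
      (by
        intro i hiA hiB
        simp only [Finset.mem_sdiff, not_and, not_not] at hiA hiB
        have hp := hPg i
        have : pulls 𝒮 g i = N i := by
          by_cases h1' : i ∈ S₁ <;> by_cases h2' : i ∈ S₂ <;>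
            simp [h1', h2'] at hp ⊢ <;> tauto
        rw [this]; ring)] at key
    have hAle : ∀ i ∈ S₁ \ S₂,
        ((∑ n ∈ Finset.Icc 1 (N i), μ i n) - ∑ n ∈ Finset.Icc 1 (pulls 𝒮 g i), μ i n)
          ≤ μ i (N i - c + 1) + ((c - 1 : ℕ) : ℝ) * μ i (N i) := by
      intro i hi
      simp only [Finset.mem_sdiff] at hi
      have hp := hPg i
      rw [if_pos hi.1, if_neg hi.2, add_zero] at hp
      have hci : c ≤ N i := hNc i hi.1
      have hPi : pulls 𝒮 g i = N i - c := by omega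
      rw [hPi, G_diff (μ i) (N i - c) (N i) (Nat.sub_le _ _)]
      have hsplit : Finset.Ioc (N i - c) (N i)
          = {N i - c + 1} ∪ Finset.Ioc (N i - c + 1) (N i) := by
        rw [← Nat.Ioc_succ_singleton,
          Finset.Ioc_union_Ioc_eq_Ioc (Nat.le_succ _) (by omega)]
      rw [hsplit, Finset.sum_union (by
        simp only [Finset.disjoint_singleton_left, Finset.mem_Ioc]
        omega), Finset.sum_singleton]
      have hb : (∑ n ∈ Finset.Ioc (N i - c + 1) (N i), μ i n)
          ≤ (Finset.Ioc (N i - c + 1) (N i)).card • μ i (N i) :=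
        Finset.sum_le_card_nsmul _ _ _ (fun n hn =>
          hmono i (Finset.mem_Ioc.mp hn).2)
      rw [Nat.card_Ioc, show N i - (N i - c + 1) = c - 1 from by omega] at hb
      rw [nsmul_eq_mul] at hb
      linarith
    have hBle : ∀ i ∈ S₂ \ S₁,
        ((∑ n ∈ Finset.Icc 1 (N i), μ i n) - ∑ n ∈ Finset.Icc 1 (pulls 𝒮 g i), μ i n)
          ≤ -((c : ℝ) * μ i (N i)) := by
      intro i hi
      simp only [Finset.mem_sdiff] at hi
      have hp := hPg i
      rw [if_pos hi.1, if_neg hi.2, add_zero] at hp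
      have hPi : pulls 𝒮 g i = N i + c := hp
      rw [hPi, ← neg_sub, G_diff (μ i) (N i) (N i + c) (Nat.le_add_right _ _)]
      have hb : (Finset.Ioc (N i) (N i + c)).card • μ i (N i)
          ≤ ∑ n ∈ Finset.Ioc (N i) (N i + c), μ i n :=
        Finset.card_nsmul_le_sum _ _ _ (fun n hn =>
          hmono i (le_of_lt (Finset.mem_Ioc.mp hn).1))
      rw [Nat.card_Ioc, Nat.add_sub_cancel_left, nsmul_eq_mul] at hb
      linarith
    have h2 := Finset.sum_le_sum hAle
    have h3 := Finset.sum_le_sum hBle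
    rw [Finset.sum_add_distrib, ← Finset.mul_sum] at h2
    rw [Finset.sum_neg_distrib, ← Finset.mul_sum] at h3
    linarith
  -- monotonicity facts
  have hm1 : (∑ i ∈ S₁ \ S₂, μ i (N i - c + 1)) ≤ ∑ i ∈ S₁ \ S₂, μ i (N i) :=
    Finset.sum_le_sum (fun i hi => by
      have := hNc i (Finset.mem_sdiff.mp hi).1
      exact hmono i (by omega))
  have hm2 : (∑ i ∈ S₁ \ S₂, μ i (N i)) ≤ ∑ i ∈ S₁ \ S₂, μ i (N i + 1) :=
    Finset.sum_le_sum (fun i _ => hmono i (Nat.le_succ _))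
  have hc1 : ((c - 1 : ℕ) : ℝ) = (c : ℝ) - 1 := by
    have : 1 ≤ c := hpos₁
    push_cast [this]; ring
  rw [hc1] at hI
  have hcR : (1:ℝ) ≤ (c:ℝ) := by exact_mod_cast hpos₁
  have hmul : (c:ℝ) * (∑ i ∈ S₁ \ S₂, μ i (N i))
      ≤ (c:ℝ) * ∑ i ∈ S₂ \ S₁, μ i (N i) :=
    mul_le_mul_of_nonneg_left (hm2.trans hII) (by positivity)
  linarith
end

section
/- (Induction step of Theorem 1) Let f* be an optimal allocation over horizon T and let S₁, S₂ ∈ 𝒮 be distinct with f*(S₁) ≥ 1 and f*(S₂) ≥ 1. Define the allocation f' by f'(S₁) = 0, f'(S₂) = f*(S₁) + f*(S₂), and f'(S) = f*(S) for all other S ∈ 𝒮. Then J(f') = J(f*); in particular f' is also optimal and uses one fewer distinct super arm. -/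
open Finset

lemma sum_split_two {α M : Type*} [DecidableEq α] [AddCommMonoid M]
    (A : Finset α) (g : α → M) (S₁ S₂ : α) (hne : S₁ ≠ S₂) :
    ∑ S ∈ A, g S = (if S₁ ∈ A then g S₁ else 0) + (if S₂ ∈ A then g S₂ else 0)
      + ∑ S ∈ (A.erase S₁).erase S₂, g S := by
  by_cases h₁ : S₁ ∈ A <;> by_cases h₂ : S₂ ∈ A
  · rw [if_pos h₁, if_pos h₂,
      ← Finset.sum_erase_add A g h₁,
      ← Finset.sum_erase_add (A.erase S₁) g (Finset.mem_erase.mpr ⟨hne.symm, h₂⟩)]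
    abel
  · rw [if_pos h₁, if_neg h₂,
      Finset.erase_eq_of_notMem (fun h => h₂ (Finset.mem_of_mem_erase h)),
      ← Finset.sum_erase_add A g h₁]
    abel
  · rw [if_neg h₁, if_pos h₂, Finset.erase_eq_of_notMem h₁,
      ← Finset.sum_erase_add A g h₂]
    abel
  · rw [if_neg h₁, if_neg h₂, Finset.erase_eq_of_notMem h₁,
      Finset.erase_eq_of_notMem h₂]
    abel

/-- (Induction step of Theorem 1) If `fstar` is an optimal allocation that pulls the distinct
super arms `S₁` and `S₂` at least once each, then reallocating all pulls of `S₁` to `S₂`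
yields the same expected cumulative reward; in particular the new allocation is also optimal. -/
theorem induction_step_merge_super_arms
    (K : ℕ) (μ : Fin K → ℕ → ℝ) (𝒮 : Finset (Finset (Fin K))) (T : ℕ)
    (h𝒮 : 𝒮.Nonempty)
    (h0 : ∀ i n, 0 ≤ μ i n) (h1 : ∀ i n, μ i n ≤ 1)
    (hmono : ∀ i, Monotone (μ i))
    (hconc : ∀ i n, μ i (n + 2) - μ i (n + 1) ≤ μ i (n + 1) - μ i n)
    (fstar : Finset (Fin K) → ℕ)
    (hsum : (∑ S ∈ 𝒮, fstar S) = T)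
    (hopt : ∀ f : Finset (Fin K) → ℕ, (∑ S ∈ 𝒮, f S) = T →
      cumReward μ 𝒮 f ≤ cumReward μ 𝒮 fstar)
    (S₁ S₂ : Finset (Fin K)) (hS₁ : S₁ ∈ 𝒮) (hS₂ : S₂ ∈ 𝒮)
    (hne : S₁ ≠ S₂) (hpos₁ : 1 ≤ fstar S₁) (hpos₂ : 1 ≤ fstar S₂) :
    cumReward μ 𝒮
        (fun S => if S = S₁ then 0 else if S = S₂ then fstar S₁ + fstar S₂ else fstar S) =
      cumReward μ 𝒮 fstar ∧
    ∀ f : Finset (Fin K) → ℕ, (∑ S ∈ 𝒮, f S) = T →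
      cumReward μ 𝒮 f ≤ cumReward μ 𝒮
        (fun S => if S = S₁ then 0 else if S = S₂ then fstar S₁ + fstar S₂ else fstar S) := by
  set total := fstar S₁ + fstar S₂ with htotal
  set fx : ℕ → Finset (Fin K) → ℕ :=
    fun x S => if S = S₁ then total - x else if S = S₂ then x else fstar S with hfx
  set c : Fin K → ℕ :=
    fun i => ∑ S ∈ ((𝒮.filter (fun S => i ∈ S)).erase S₁).erase S₂, fstar S with hc
  -- pulls formula
  have hpulls : ∀ x, x ≤ total → ∀ i, pulls 𝒮 (fx x) i =
      (if i ∈ S₁ then total - x else 0) + (if i ∈ S₂ then x else 0) + c i := by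
    intro x hx i
    rw [pulls, sum_split_two _ _ S₁ S₂ hne]
    have m₁ : S₁ ∈ 𝒮.filter (fun S => i ∈ S) ↔ i ∈ S₁ := by simp [hS₁]
    have m₂ : S₂ ∈ 𝒮.filter (fun S => i ∈ S) ↔ i ∈ S₂ := by simp [hS₂]
    have e₁ : fx x S₁ = total - x := by simp [hfx]
    have e₂ : fx x S₂ = x := by simp [hfx, hne.symm]
    have e₃ : ∑ S ∈ ((𝒮.filter (fun S => i ∈ S)).erase S₁).erase S₂, fx x S = c i := by
      apply Finset.sum_congr rfl
      intro S hS
      have h2 : S ≠ S₂ := (Finset.mem_erase.mp hS).1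
      have h1' : S ≠ S₁ := (Finset.mem_erase.mp (Finset.mem_of_mem_erase hS)).1
      simp [hfx, h1', h2]
    rw [e₁, e₂, e₃]
    by_cases hi1 : i ∈ S₁ <;> by_cases hi2 : i ∈ S₂ <;> simp [m₁, m₂, hi1, hi2]
  set F : Fin K → ℕ → ℝ := fun i m => ∑ n ∈ Finset.Icc 1 m, μ i n with hF
  have hFsucc : ∀ i m, F i (m + 1) = F i m + μ i (m + 1) := by
    intro i m
    rw [hF]
    exact Finset.sum_Icc_succ_top (Nat.succ_le_succ (Nat.zero_le m)) _
  set G : ℕ → ℝ := fun x => cumReward μ 𝒮 (fx x) with hG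
  have hGval : ∀ x, x ≤ total → G x =
      ∑ i : Fin K, F i ((if i ∈ S₁ then total - x else 0) + (if i ∈ S₂ then x else 0) + c i) := by
    intro x hx
    simp only [hG, cumReward]
    apply Finset.sum_congr rfl
    intro i _
    rw [hpulls x hx i]
  -- step monotonicity
  have hstep : ∀ x y, x ≤ y → y + 1 ≤ total → G (x + 1) - G x ≤ G (y + 1) - G y := by
    intro x y hxy hy1
    have hx1 : x + 1 ≤ total := by omega
    rw [hGval (x+1) hx1, hGval x (by omega), hGval (y+1) hy1, hGval y (by omega),
      ← Finset.sum_sub_distrib, ← Finset.sum_sub_distrib]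
    apply Finset.sum_le_sum
    intro i _
    by_cases hi1 : i ∈ S₁ <;> by_cases hi2 : i ∈ S₂ <;> simp only [hi1, hi2, if_pos, if_neg,
      if_true, if_false]
    · -- both: constant
      have ex : total - (x+1) + (x+1) + c i = total - x + x + c i := by omega
      have ey : total - (y+1) + (y+1) + c i = total - y + y + c i := by omega
      rw [ex, ey]
      simp
    · -- i ∈ S₁ only
      have ex : total - x + 0 + c i = (total - (x+1) + 0 + c i) + 1 := by omega
      have ey : total - y + 0 + c i = (total - (y+1) + 0 + c i) + 1 := by omega
      rw [ex, ey, hFsucc, hFsucc]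
      have harg : total - (y+1) + 0 + c i + 1 ≤ total - (x+1) + 0 + c i + 1 := by omega
      have := hmono i harg
      linarith
    · -- i ∈ S₂ only
      have ex : 0 + (x+1) + c i = (0 + x + c i) + 1 := by omega
      have ey : 0 + (y+1) + c i = (0 + y + c i) + 1 := by omega
      rw [ex, ey, hFsucc, hFsucc]
      have harg : 0 + x + c i + 1 ≤ 0 + y + c i + 1 := by omega
      have := hmono i harg
      linarith
    · simp
  -- fx sums to T
  have hsum_fx : ∀ x, x ≤ total → ∑ S ∈ 𝒮, fx x S = T := by
    intro x hx
    rw [sum_split_two 𝒮 (fx x) S₁ S₂ hne, if_pos hS₁, if_pos hS₂,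
      ← hsum, sum_split_two 𝒮 fstar S₁ S₂ hne, if_pos hS₁, if_pos hS₂]
    have e₃ : ∑ S ∈ ((𝒮.erase S₁).erase S₂), fx x S = ∑ S ∈ ((𝒮.erase S₁).erase S₂), fstar S := by
      apply Finset.sum_congr rfl
      intro S hS
      have h2 : S ≠ S₂ := (Finset.mem_erase.mp hS).1
      have h1' : S ≠ S₁ := (Finset.mem_erase.mp (Finset.mem_of_mem_erase hS)).1
      simp [hfx, h1', h2]
    have e₁ : fx x S₁ = total - x := by simp [hfx]
    have e₂ : fx x S₂ = x := by simp [hfx, hne.symm]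
    rw [e₁, e₂, e₃]
    omega
  set x₀ := fstar S₂ with hx₀
  have hx₀le : x₀ ≤ total := by omega
  have hfix : fx x₀ = fstar := by
    funext S
    by_cases h1' : S = S₁
    · subst h1'; simp [hfx, hne]; omega
    · by_cases h2 : S = S₂
      · subst h2; simp [hfx, hne.symm]; rfl
      · simp [hfx, h1', h2]
  have hGx₀ : G x₀ = cumReward μ 𝒮 fstar := by rw [hG]; simp only; rw [hfix]
  have hopt' : ∀ x, x ≤ total → G x ≤ G x₀ := by
    intro x hx
    rw [hGx₀]
    exact hopt (fx x) (hsum_fx x hx)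
  -- d(x₀ - 1) ≥ 0
  have hd0 : 0 ≤ G x₀ - G (x₀ - 1) := by
    have := hopt' (x₀ - 1) (by omega)
    linarith
  have hx₀eq : (x₀ - 1) + 1 = x₀ := by omega
  have hmonoG : ∀ y, x₀ ≤ y → y ≤ total → G x₀ ≤ G y := by
    intro y hy
    induction y, hy using Nat.le_induction with
    | base => intro _; exact le_refl _
    | succ n hn ih =>
      intro hn1
      have h1' := ih (by omega)
      have h2 := hstep (x₀ - 1) n (by omega) hn1
      rw [hx₀eq] at h2
      linarith
  have hfinal : G total = G x₀ :=
    le_antisymm (hopt' total le_rfl) (hmonoG total (by omega) le_rfl)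
  have hlam : (fun S => if S = S₁ then 0 else if S = S₂ then fstar S₁ + fstar S₂ else fstar S)
      = fx total := by
    funext S
    by_cases h1' : S = S₁
    · subst h1'; simp [hfx, hne]
    · by_cases h2 : S = S₂
      · subst h2; simp [hfx, hne.symm]; rfl
      · simp [hfx, h1', h2]
  have hGtotal : cumReward μ 𝒮
      (fun S => if S = S₁ then 0 else if S = S₂ then fstar S₁ + fstar S₂ else fstar S)
      = G total := by rw [hlam, hG]
  constructor
  · rw [hGtotal, hfinal, hGx₀]
  · intro f hf
    rw [hGtotal, hfinal, hGx₀]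
    exact hopt f hf
end

section
/- (Two-armed worst-case lower bound, core of Lemma B.2) Let T be an integer divisible by 3 with T ≥ 12. For all integers s, n_A, n_B with 0 ≤ s ≤ T/3, s ≤ n_A ≤ T, and 0 ≤ n_B ≤ 2T/3 + s, we have max( Σ_{n=1}^{T} μ^A(n) − J_A(n_A), T/2 − J_B(n_B) ) ≥ T/32. -/
open Finset

/-- Reward function of the rising arm on instance A: `μ^A(n) = 3n/(2T)` if `n ≤ 2T/3`,
and `1` otherwise. -/
noncomputable def muA (T n : ℕ) : ℝ := if 3 * n ≤ 2 * T then (3 * n : ℝ) / (2 * T) else 1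

/-- Reward function of the rising arm on instance B: `μ^B(n) = 3n/(2T)` if `n ≤ T/3`,
and `1/2` otherwise. -/
noncomputable def muB (T n : ℕ) : ℝ := if 3 * n ≤ T then (3 * n : ℝ) / (2 * T) else 1 / 2

/-- Cumulative reward over horizon `T` on instance A when the constant arm (mean `1/2`) is
pulled `n₁` times and the rising arm the remaining `T - n₁` times. -/
noncomputable def JA (T n₁ : ℕ) : ℝ := (n₁ : ℝ) / 2 + ∑ n ∈ Finset.Icc 1 (T - n₁), muA T n

/-- Cumulative reward over horizon `T` on instance B when the constant arm (mean `1/2`) is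
pulled `n₁` times and the rising arm the remaining `T - n₁` times. -/
noncomputable def JB (T n₁ : ℕ) : ℝ := (n₁ : ℝ) / 2 + ∑ n ∈ Finset.Icc 1 (T - n₁), muB T n

lemma gauss_icc (k : ℕ) : (∑ n ∈ Finset.Icc 1 k, (n : ℝ)) = k * (k + 1) / 2 := by
  induction k with
  | zero => simp
  | succ k ih =>
    rw [Finset.sum_Icc_succ_top (by omega)]
    push_cast
    rw [ih]; ring

lemma sumA_low (m k : ℕ) (hm : 0 < m) (hk : k ≤ 2 * m) :
    ∑ n ∈ Finset.Icc 1 k, muA (3 * m) n = k * (k + 1) / (4 * m) := by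
  have h : ∀ n ∈ Finset.Icc 1 k, muA (3 * m) n = (n : ℝ) / (2 * m) := by
    intro n hn
    simp only [Finset.mem_Icc] at hn
    unfold muA
    rw [if_pos (by omega)]
    have hm' : (0:ℝ) < m := by exact_mod_cast hm
    push_cast
    field_simp
  rw [Finset.sum_congr rfl h, ← Finset.sum_div, gauss_icc, div_div]
  ring_nf

lemma sumA_high (m k : ℕ) (hm : 0 < m) (hk : 2 * m ≤ k) :
    ∑ n ∈ Finset.Icc 1 k, muA (3 * m) n = (2 * m + 1) / 2 + ((k : ℝ) - 2 * m) := by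
  have hsplit : ∑ n ∈ Finset.Ioc 0 (2 * m), muA (3 * m) n
      + ∑ n ∈ Finset.Ioc (2 * m) k, muA (3 * m) n
      = ∑ n ∈ Finset.Ioc 0 k, muA (3 * m) n :=
    Finset.sum_Ioc_consecutive _ (by omega) hk
  have hIcc : ∀ j : ℕ, Finset.Icc 1 j = Finset.Ioc 0 j := by
    intro j; ext x; simp [Finset.mem_Icc, Finset.mem_Ioc]; omega
  have h1 : ∑ n ∈ Finset.Ioc 0 (2 * m), muA (3 * m) n = (2 * m) * (2 * m + 1) / (4 * m) := by
    rw [← hIcc]; exact_mod_cast sumA_low m (2 * m) hm le_rfl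
  have h2 : ∑ n ∈ Finset.Ioc (2 * m) k, muA (3 * m) n = (k : ℝ) - 2 * m := by
    have h : ∀ n ∈ Finset.Ioc (2 * m) k, muA (3 * m) n = 1 := by
      intro n hn
      simp only [Finset.mem_Ioc] at hn
      unfold muA
      rw [if_neg (by omega)]
    rw [Finset.sum_congr rfl h, Finset.sum_const, Nat.card_Ioc]
    have : ((k - 2 * m : ℕ) : ℝ) = (k : ℝ) - 2 * m := by
      push_cast [Nat.cast_sub hk]; ring
    simp [this]
  rw [hIcc, ← hsplit, h1, h2]
  have hm' : (0:ℝ) < m := by exact_mod_cast hm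
  field_simp
  ring

lemma sumB_low (m k : ℕ) (hm : 0 < m) (hk : k ≤ m) :
    ∑ n ∈ Finset.Icc 1 k, muB (3 * m) n = k * (k + 1) / (4 * m) := by
  have h : ∀ n ∈ Finset.Icc 1 k, muB (3 * m) n = (n : ℝ) / (2 * m) := by
    intro n hn
    simp only [Finset.mem_Icc] at hn
    unfold muB
    rw [if_pos (by omega)]
    have hm' : (0:ℝ) < m := by exact_mod_cast hm
    push_cast
    field_simp
  rw [Finset.sum_congr rfl h, ← Finset.sum_div, gauss_icc, div_div]
  ring_nf

lemma sumB_high (m k : ℕ) (hm : 0 < m) (hk : m ≤ k) :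
    ∑ n ∈ Finset.Icc 1 k, muB (3 * m) n = (m + 1) / 4 + ((k : ℝ) - m) / 2 := by
  have hsplit : ∑ n ∈ Finset.Ioc 0 m, muB (3 * m) n
      + ∑ n ∈ Finset.Ioc m k, muB (3 * m) n
      = ∑ n ∈ Finset.Ioc 0 k, muB (3 * m) n :=
    Finset.sum_Ioc_consecutive _ (by omega) hk
  have hIcc : ∀ j : ℕ, Finset.Icc 1 j = Finset.Ioc 0 j := by
    intro j; ext x; simp [Finset.mem_Icc, Finset.mem_Ioc]; omega
  have h1 : ∑ n ∈ Finset.Ioc 0 m, muB (3 * m) n = m * (m + 1) / (4 * m) := by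
    rw [← hIcc]; exact_mod_cast sumB_low m m hm le_rfl
  have h2 : ∑ n ∈ Finset.Ioc m k, muB (3 * m) n = ((k : ℝ) - m) / 2 := by
    have h : ∀ n ∈ Finset.Ioc m k, muB (3 * m) n = 1 / 2 := by
      intro n hn
      simp only [Finset.mem_Ioc] at hn
      unfold muB
      rw [if_neg (by omega)]
    rw [Finset.sum_congr rfl h, Finset.sum_const, Nat.card_Ioc]
    have : ((k - m : ℕ) : ℝ) = (k : ℝ) - m := by
      push_cast [Nat.cast_sub hk]; ring
    simp [this]
    ring
  rw [hIcc, ← hsplit, h1, h2]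
  have hm' : (0:ℝ) < m := by exact_mod_cast hm
  field_simp

/-- (Two-armed worst-case lower bound, core of Lemma B.2) For `T` divisible by 3 with
`T ≥ 12`, and any integers `0 ≤ s ≤ T/3`, `s ≤ nA ≤ T`, `0 ≤ nB ≤ 2T/3 + s`, the larger of
the two instances' regrets is at least `T/32`. -/
theorem two_armed_worst_case_lower_bound
    (T : ℕ) (hT3 : 3 ∣ T) (hT : 12 ≤ T)
    (s nA nB : ℕ) (hs : s ≤ T / 3) (hsA : s ≤ nA) (hAT : nA ≤ T)
    (hB : nB ≤ 2 * T / 3 + s) :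
    (T : ℝ) / 32 ≤
      max ((∑ n ∈ Finset.Icc 1 T, muA T n) - JA T nA) ((T : ℝ) / 2 - JB T nB) := by
  obtain ⟨m, rfl⟩ : ∃ m, T = 3 * m := ⟨T / 3, by omega⟩
  have hm4 : 4 ≤ m := by omega
  have hm : 0 < m := by omega
  have hsm : s ≤ m := by
    have h3 : 3 * m / 3 = m := by omega
    omega
  have hB' : nB ≤ 2 * m + s := by
    have h3 : 2 * (3 * m) / 3 = 2 * m := by omega
    omega
  set kA := 3 * m - nA with hkA
  set kB := 3 * m - nB with hkB
  have hA1 : nA + kA = 3 * m := by omega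
  have hB1 : nB + kB = 3 * m := by omega
  have hB2 : m ≤ kB + s := by omega
  have hmR : (4:ℝ) ≤ m := by exact_mod_cast hm4
  have hcA : (nA : ℝ) + kA = 3 * m := by exact_mod_cast congrArg (Nat.cast (R := ℝ)) hA1
  have hcB : (nB : ℝ) + kB = 3 * m := by exact_mod_cast congrArg (Nat.cast (R := ℝ)) hB1
  have hcB2 : (m : ℝ) ≤ kB + s := by exact_mod_cast hB2
  have hcsA : (s : ℝ) ≤ nA := by exact_mod_cast hsA
  have hs0 : (0:ℝ) ≤ s := by positivity
  have hAsum : ∑ n ∈ Finset.Icc 1 (3 * m), muA (3 * m) n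
      = (2 * m + 1) / 2 + ((3 * m : ℕ) : ℝ) - 2 * m := by
    rw [sumA_high m (3 * m) hm (by omega)]; push_cast; ring
  unfold JA JB
  rw [show 3 * m - nA = kA from rfl, show 3 * m - nB = kB from rfl, hAsum]
  push_cast
  by_cases hA2 : kA ≤ 2 * m
  · apply le_max_of_le_left
    rw [sumA_low m kA hm hA2]
    have hc : (kA : ℝ) ≤ 2 * m := by exact_mod_cast hA2
    have hk0 : (0:ℝ) ≤ kA := by positivity
    have hprod : (0:ℝ) ≤ (kA : ℝ) * (2 * m - kA) := mul_nonneg hk0 (by linarith)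
    have hmR0 : (0:ℝ) < m := by linarith
    have hDle : (kA : ℝ) * (kA + 1) / (4 * m) ≤ kA / 2 + 1 / 2 := by
      rw [div_le_iff₀ (by positivity)]
      nlinarith [hprod]
    linarith
  · by_cases hs16 : 3 * m ≤ 16 * s
    · apply le_max_of_le_left
      rw [sumA_high m kA hm (by omega)]
      have hc : (3:ℝ) * m ≤ 16 * s := by exact_mod_cast hs16
      linarith
    · apply le_max_of_le_right
      have hs16' : 16 * (s : ℝ) + 1 ≤ 3 * m := by
        have : 16 * s + 1 ≤ 3 * m := by omega
        exact_mod_cast this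
      by_cases hkBm : kB ≤ m
      · rw [sumB_low m kB hm hkBm]
        have hc : (kB : ℝ) ≤ m := by exact_mod_cast hkBm
        have hk0 : (0:ℝ) ≤ kB := by positivity
        have hmR0 : (0:ℝ) < m := by linarith
        have hprod : (0:ℝ) ≤ ((kB : ℝ) - (m - s)) * ((m : ℝ) - kB) :=
          mul_nonneg (by linarith) (by linarith)
        have hDle : (kB : ℝ) * (kB + 1) / (4 * m) ≤ kB / 2 - 3 * m / 32 := by
          rw [div_le_iff₀ (by positivity)]
          nlinarith [hprod, mul_nonneg hs0 hs0, mul_nonneg hs0 hk0, mul_nonneg hs0 hmR0.le]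
        linarith
      · rw [sumB_high m kB hm (by omega)]
        linarith
end

section
/- (Case A bound in Lemma B.2) Let T be a positive integer divisible by 3. For all integers s, n_A with 0 ≤ s ≤ T/3 and s ≤ n_A ≤ T: J_A(n_A) ≤ s/2 + Σ_{n=1}^{T−s} μ^A(n), and consequently the regret on instance A satisfies Σ_{n=1}^{T} μ^A(n) − J_A(n_A) ≥ s/2. -/
open Finset

lemma sum_muA_low (m : ℕ) (hm : 0 < m) (k : ℕ) (hk : k ≤ 2 * m) :
    ∑ n ∈ Finset.Ioc 0 k, muA (3 * m) n = 3 * k * (k + 1) / (12 * m) := by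
  induction k with
  | zero => simp
  | succ k ih =>
    rw [Finset.sum_Ioc_succ_top (Nat.zero_le _), ih (by omega)]
    rw [muA, if_pos (by omega)]
    have hm' : (m : ℝ) ≠ 0 := by positivity
    push_cast
    field_simp
    ring

lemma sum_muA_high (m : ℕ) (hm : 0 < m) (k : ℕ) (h1 : 2 * m ≤ k) :
    ∑ n ∈ Finset.Ioc 0 k, muA (3 * m) n = (2 * m + 1) / 2 + ((k : ℝ) - 2 * m) := by
  induction k, h1 using Nat.le_induction with
  | base =>
    rw [sum_muA_low m hm _ le_rfl]
    have hm' : (m : ℝ) ≠ 0 := by positivity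
    push_cast
    field_simp
    ring
  | succ k hk ih =>
    rw [Finset.sum_Ioc_succ_top (Nat.zero_le _), ih]
    rw [muA, if_neg (by omega)]
    push_cast
    ring

/-- (Case A bound in Lemma B.2) For integers `0 ≤ s ≤ T/3` and `s ≤ nA ≤ T`:
`JA(nA) ≤ s/2 + Σ_{n=1}^{T-s} muA(n)`, and consequently the regret on instance A satisfies
`Σ_{n=1}^{T} muA(n) - JA(nA) ≥ s/2`. -/
theorem caseA_bound
    (T : ℕ) (hT0 : 0 < T) (hT3 : 3 ∣ T)
    (s nA : ℕ) (hs : s ≤ T / 3) (hsA : s ≤ nA) (hAT : nA ≤ T) :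
    JA T nA ≤ (s : ℝ) / 2 + (∑ n ∈ Finset.Icc 1 (T - s), muA T n) ∧
    (s : ℝ) / 2 ≤ (∑ n ∈ Finset.Icc 1 T, muA T n) - JA T nA := by
  obtain ⟨m, rfl⟩ := hT3
  have hm : 0 < m := by omega
  have hsm : s ≤ m := by omega
  have hIcc : ∀ k : ℕ, Finset.Icc 1 k = Finset.Ioc 0 k := fun k => rfl
  have hTpos : (0 : ℝ) < 3 * m := by positivity
  -- first part
  have part1 : JA (3 * m) nA ≤ (s : ℝ) / 2 + ∑ n ∈ Finset.Icc 1 (3 * m - s), muA (3 * m) n := by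
    rw [JA, hIcc, hIcc]
    by_cases hcase : nA ≤ 2 * m
    · -- split the sum on the RHS
      have hsplit := Finset.sum_Ioc_consecutive (muA (3 * m))
        (Nat.zero_le (3 * m - nA)) (show 3 * m - nA ≤ 3 * m - s by omega)
      have hge : (↑(#(Finset.Ioc (3 * m - nA) (3 * m - s))) : ℝ) * (1 / 2) ≤
          ∑ n ∈ Finset.Ioc (3 * m - nA) (3 * m - s), muA (3 * m) n := by
        have := Finset.card_nsmul_le_sum (Finset.Ioc (3 * m - nA) (3 * m - s))
          (muA (3 * m)) ((1 : ℝ) / 2) ?_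
        · simpa [nsmul_eq_mul] using this
        · intro x hx
          simp only [Finset.mem_Ioc] at hx
          have hx1 : 3 * m ≤ 3 * x := by omega
          rw [muA]
          split_ifs with h
          · rw [le_div_iff₀ (by positivity)]
            have hx1' : 3 * (m : ℝ) ≤ 3 * x := by exact_mod_cast hx1
            push_cast
            linarith
          · linarith
      have hcard : #(Finset.Ioc (3 * m - nA) (3 * m - s)) = nA - s := by
        rw [Nat.card_Ioc]; omega
      rw [hcard] at hge
      have hcast : ((nA - s : ℕ) : ℝ) = (nA : ℝ) - s := by
        push_cast [Nat.cast_sub hsA]; ring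
      rw [hcast] at hge
      linarith [hsplit, hge]
    · -- nA > 2m : JA ≤ T/2
      push_neg at hcase
      have hub : ∑ n ∈ Finset.Ioc 0 (3 * m - nA), muA (3 * m) n ≤
          (↑(3 * m - nA) : ℝ) * (1 / 2) := by
        have := Finset.sum_le_card_nsmul (Finset.Ioc 0 (3 * m - nA))
          (muA (3 * m)) ((1 : ℝ) / 2) ?_
        · simpa [nsmul_eq_mul, Nat.card_Ioc] using this
        · intro x hx
          simp only [Finset.mem_Ioc] at hx
          have hx1 : 3 * x ≤ 3 * m := by omega
          rw [muA, if_pos (by omega), div_le_iff₀ (by positivity)]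
          have hx1' : 3 * (x : ℝ) ≤ 3 * m := by exact_mod_cast hx1
          push_cast
          linarith
      have hsum := sum_muA_high m hm (3 * m - s) (by omega)
      rw [hsum]
      have h1 : ((3 * m - nA : ℕ) : ℝ) = 3 * m - nA := by
        push_cast [Nat.cast_sub hAT]; ring
      have h2 : ((3 * m - s : ℕ) : ℝ) = 3 * m - s := by
        push_cast [Nat.cast_sub (show s ≤ 3 * m by omega)]; ring
      rw [h1] at hub
      rw [h2]
      have hsR : (s : ℝ) ≤ m := by exact_mod_cast hsm
      have hnAR : (nA : ℝ) ≤ 3 * m := by exact_mod_cast hAT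
      linarith
  refine ⟨part1, ?_⟩
  -- second part
  have hA := sum_muA_high m hm (3 * m) (by omega)
  have hB := sum_muA_high m hm (3 * m - s) (by omega)
  have h2 : ((3 * m - s : ℕ) : ℝ) = 3 * m - s := by
    push_cast [Nat.cast_sub (show s ≤ 3 * m by omega)]; ring
  rw [h2] at hB
  have hA' : ∑ n ∈ Finset.Icc 1 (3 * m), muA (3 * m) n
      = (2 * (m : ℝ) + 1) / 2 + (3 * (m : ℝ) - 2 * m) := by
    rw [hIcc]; rw [hA]; push_cast; ring
  have hB' : ∑ n ∈ Finset.Icc 1 (3 * m - s), muA (3 * m) n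
      = (2 * (m : ℝ) + 1) / 2 + (3 * (m : ℝ) - s - 2 * m) := by
    rw [hIcc]; rw [hB]
  linarith [part1]
end

section
/- (Case B bound in Lemma B.2) Let T be a positive integer divisible by 3. For all integers s, n_B with 0 ≤ s ≤ T/3 and 0 ≤ n_B ≤ 2T/3 + s: J_B(n_B) ≤ (2T/3 + s)/2 + Σ_{n=1}^{T/3 − s} μ^B(n) = 3s²/(4T) − 3s/(4T) + 5T/12 + 1/4, and consequently the regret on instance B satisfies T/2 − J_B(n_B) ≥ −3s²/(4T) + 3s/(4T) + T/12 − 1/4. -/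
open Finset

lemma muB_le_half (T n : ℕ) (hT0 : 0 < T) : muB T n ≤ 1 / 2 := by
  unfold muB
  split_ifs with h
  · rw [div_le_div_iff₀ (by positivity) (by norm_num)]
    have h' : (3 : ℝ) * n ≤ T := by exact_mod_cast h
    nlinarith
  · exact le_refl _

lemma JB_succ_le (T n : ℕ) (hT0 : 0 < T) : JB T n ≤ JB T (n + 1) := by
  unfold JB
  rcases le_or_gt T n with h | h
  · rw [Nat.sub_eq_zero_of_le h, Nat.sub_eq_zero_of_le (le_trans h (Nat.le_succ n))]
    push_cast; linarith
  · have hk : T - n = (T - (n + 1)) + 1 := by omega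
    rw [hk, Finset.sum_Icc_succ_top (by omega)]
    have := muB_le_half T (T - (n + 1) + 1) hT0
    push_cast; linarith

lemma JB_mono (T : ℕ) (hT0 : 0 < T) : Monotone (JB T) :=
  monotone_nat_of_le_succ (fun n => JB_succ_le T n hT0)

lemma sum_Icc_id (k : ℕ) : ∑ n ∈ Finset.Icc 1 k, (n : ℝ) = k * (k + 1) / 2 := by
  induction k with
  | zero => simp
  | succ k ih =>
    rw [Finset.sum_Icc_succ_top (by omega), ih]
    push_cast; ring

/-- (Case B bound in Lemma B.2) For integers `0 ≤ s ≤ T/3` and `0 ≤ nB ≤ 2T/3 + s`: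
`JB(nB) ≤ (2T/3 + s)/2 + Σ_{n=1}^{T/3-s} muB(n)`, this bound equals
`3s²/(4T) - 3s/(4T) + 5T/12 + 1/4`, and consequently the regret on instance B satisfies
`T/2 - JB(nB) ≥ -3s²/(4T) + 3s/(4T) + T/12 - 1/4`. -/
theorem caseB_bound
    (T : ℕ) (hT0 : 0 < T) (hT3 : 3 ∣ T)
    (s nB : ℕ) (hs : s ≤ T / 3) (hB : nB ≤ 2 * T / 3 + s) :
    JB T nB ≤ ((2 * T / 3 + s : ℕ) : ℝ) / 2 + (∑ n ∈ Finset.Icc 1 (T / 3 - s), muB T n) ∧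
    ((2 * T / 3 + s : ℕ) : ℝ) / 2 + (∑ n ∈ Finset.Icc 1 (T / 3 - s), muB T n) =
      3 * (s : ℝ) ^ 2 / (4 * T) - 3 * (s : ℝ) / (4 * T) + 5 * (T : ℝ) / 12 + 1 / 4 ∧
    -(3 * (s : ℝ) ^ 2) / (4 * T) + 3 * (s : ℝ) / (4 * T) + (T : ℝ) / 12 - 1 / 4 ≤
      (T : ℝ) / 2 - JB T nB := by
  obtain ⟨m, rfl⟩ := hT3
  have hm0 : 0 < m := by omega
  have hdiv : 3 * m / 3 = m := by omega
  have hdiv2 : 2 * (3 * m) / 3 = 2 * m := by omega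
  rw [hdiv2, hdiv]
  have hsm : s ≤ m := by rwa [hdiv] at hs
  have hB' : nB ≤ 2 * m + s := by rwa [hdiv2] at hB
  -- the top value equals the RHS bound
  have hJtop : JB (3 * m) (2 * m + s)
      = ((2 * m + s : ℕ) : ℝ) / 2 + ∑ n ∈ Finset.Icc 1 (m - s), muB (3 * m) n := by
    unfold JB
    rw [show 3 * m - (2 * m + s) = m - s by omega]
  have h1 : JB (3 * m) nB
      ≤ ((2 * m + s : ℕ) : ℝ) / 2 + ∑ n ∈ Finset.Icc 1 (m - s), muB (3 * m) n := by
    rw [← hJtop]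
    exact JB_mono (3 * m) (by omega) hB'
  -- evaluate the sum
  have hsum : ∑ n ∈ Finset.Icc 1 (m - s), muB (3 * m) n
      = ((m : ℝ) - s) * ((m : ℝ) - s + 1) / (4 * m) := by
    have hcongr : ∀ n ∈ Finset.Icc 1 (m - s), muB (3 * m) n = (n : ℝ) / (2 * m) := by
      intro n hn
      simp only [Finset.mem_Icc] at hn
      unfold muB
      rw [if_pos (by omega)]
      push_cast
      field_simp
    rw [Finset.sum_congr rfl hcongr, ← Finset.sum_div, sum_Icc_id]
    rw [Nat.cast_sub hsm, div_div]
    ring_nf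
  have hms : (0:ℝ) < m := by exact_mod_cast hm0
  have h2 : ((2 * m + s : ℕ) : ℝ) / 2 + ∑ n ∈ Finset.Icc 1 (m - s), muB (3 * m) n
      = 3 * (s : ℝ) ^ 2 / (4 * (3 * m : ℕ)) - 3 * (s : ℝ) / (4 * (3 * m : ℕ))
        + 5 * ((3 * m : ℕ) : ℝ) / 12 + 1 / 4 := by
    rw [hsum]
    push_cast
    field_simp
    ring
  refine ⟨h1, h2, ?_⟩
  have key : -(3 * (s : ℝ) ^ 2) / (4 * (3 * m : ℕ)) + 3 * (s : ℝ) / (4 * (3 * m : ℕ))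
      + ((3 * m : ℕ) : ℝ) / 12 - 1 / 4
      = ((3 * m : ℕ) : ℝ) / 2
        - (3 * (s : ℝ) ^ 2 / (4 * (3 * m : ℕ)) - 3 * (s : ℝ) / (4 * (3 * m : ℕ))
          + 5 * ((3 * m : ℕ) : ℝ) / 12 + 1 / 4) := by
    push_cast
    field_simp
    ring
  rw [key]
  linarith [h2 ▸ h1]
end

section
/- For every real c with 1 < c < 2, setting a = (2−c)^{1/(c−1)} (so that 0 < a < 1), the following strict inequality holds: (1−a)^{2−c}/(c−1) + (1−a)^{2−c}/(2−c) + a^{2−c}/(c−1) − 1/(c−1) − 1/(2−c) > 0. -/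
/-- Positivity of the coefficient (A) of `T^(2-c)` in the proof of Theorem 4: for every
real `1 < c < 2`, setting `a = (2-c)^(1/(c-1))`,
`(1-a)^(2-c)/(c-1) + (1-a)^(2-c)/(2-c) + a^(2-c)/(c-1) - 1/(c-1) - 1/(2-c) > 0`. -/
theorem termA_positive (c : ℝ) (hc1 : 1 < c) (hc2 : c < 2) (a : ℝ)
    (ha : a = (2 - c) ^ (1 / (c - 1))) :
    0 < (1 - a) ^ (2 - c) / (c - 1) + (1 - a) ^ (2 - c) / (2 - c) + a ^ (2 - c) / (c - 1)
        - 1 / (c - 1) - 1 / (2 - c) := by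
  have h2c : (0:ℝ) < 2 - c := by linarith
  have hc1' : (0:ℝ) < c - 1 := by linarith
  have ha0 : 0 < a := ha ▸ Real.rpow_pos_of_pos h2c _
  have ha1 : a < 1 := ha ▸ Real.rpow_lt_one h2c.le (by linarith) (by positivity)
  have key1 : a ^ (2 - c) = a / (2 - c) := by
    rw [ha, ← Real.rpow_mul h2c.le,
      show 1 / (c - 1) * (2 - c) = 1 / (c - 1) - 1 by field_simp; ring,
      Real.rpow_sub h2c, Real.rpow_one]
  have key2 : 1 - a < (1 - a) ^ (2 - c) := by
    have h := Real.rpow_lt_rpow_of_exponent_gt (x := 1 - a) (by linarith) (by linarith)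
      (show (2:ℝ) - c < 1 by linarith)
    rwa [Real.rpow_one] at h
  have heq : (1 - a) ^ (2 - c) / (c - 1) + (1 - a) ^ (2 - c) / (2 - c) + a ^ (2 - c) / (c - 1)
        - 1 / (c - 1) - 1 / (2 - c)
      = ((1 - a) ^ (2 - c) - (1 - a)) / ((c - 1) * (2 - c)) := by
    rw [key1]
    field_simp
    ring
  rw [heq]
  exact div_pos (by linarith) (by positivity)
end

section
/- For all reals σ > 0 and ε with 0 < ε ≤ 1, there exists a constant C > 0 such that for every integer T ≥ 2: Σ_{n=1}^{T} 2·min( σT·√( 6·log(4T) / (ε n)³ ), 1 ) ≤ C·T^{2/3}·(log T)^{1/3}. -/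
lemma step_bound (x : ℝ) (hx : 1 ≤ x) :
    ((x+1) * Real.sqrt (x+1))⁻¹ ≤ 2 / Real.sqrt x - 2 / Real.sqrt (x+1) := by
  have h0 : (0:ℝ) < x := by linarith
  have hs0 : 0 < Real.sqrt x := Real.sqrt_pos.mpr h0
  have hs1 : 0 < Real.sqrt (x+1) := Real.sqrt_pos.mpr (by linarith)
  have e0 : Real.sqrt x * Real.sqrt x = x := Real.mul_self_sqrt h0.le
  have e1 : Real.sqrt (x+1) * Real.sqrt (x+1) = x+1 := Real.mul_self_sqrt (by linarith)
  have hle : Real.sqrt x ≤ Real.sqrt (x+1) := Real.sqrt_le_sqrt (by linarith)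
  rw [inv_eq_one_div, div_sub_div _ _ hs0.ne' hs1.ne',
    div_le_div_iff₀ (by positivity) (by positivity)]
  nlinarith [mul_pos hs0 hs1, sq_nonneg (Real.sqrt (x+1) - Real.sqrt x),
    mul_le_mul_of_nonneg_left hle hs1.le, mul_pos (mul_pos hs0 hs1) hs1]

lemma telescope (N : ℕ) (hN : 1 ≤ N) : ∀ M : ℕ, N ≤ M →
    ∑ n ∈ Finset.Ioc N M, ((n:ℝ) * Real.sqrt n)⁻¹ ≤ 2 / Real.sqrt N - 2 / Real.sqrt M := by
  refine Nat.le_induction ?_ ?_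
  · simp
  · intro M hM ih
    rw [Finset.sum_Ioc_succ_top (by omega)]
    have h1 : (1:ℝ) ≤ (M:ℝ) := by exact_mod_cast hN.trans hM
    have := step_bound (M:ℝ) h1
    push_cast
    linarith

/-- (Bound on the cumulative exploration-bonus term (B2) in the proof of Theorem 2) For all
reals `σ > 0` and `0 < ε ≤ 1` there is a constant `C > 0` such that for every integer `T ≥ 2`:
`Σ_{n=1}^{T} 2·min(σT·√(6·log(4T)/(εn)³), 1) ≤ C·T^(2/3)·(log T)^(1/3)`. -/
theorem bonus_sum_bound (σ ε : ℝ) (hσ : 0 < σ) (hε0 : 0 < ε) (hε1 : ε ≤ 1) :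
    ∃ C : ℝ, 0 < C ∧ ∀ T : ℕ, 2 ≤ T →
      (∑ n ∈ Finset.Icc 1 T,
          2 * min (σ * (T : ℝ) *
            Real.sqrt (6 * Real.log (4 * (T : ℝ)) / (ε * (n : ℝ)) ^ 3)) 1) ≤
        C * (T : ℝ) ^ ((2 : ℝ) / 3) * Real.log (T : ℝ) ^ ((1 : ℝ) / 3) := by
  set K : ℝ := (18:ℝ) ^ ((1:ℝ)/3) * σ ^ ((2:ℝ)/3) / ε with hK_def
  have hK : 0 < K := by positivity
  refine ⟨6 * K + 4, by positivity, ?_⟩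
  intro T hT
  have ht : (2:ℝ) ≤ (T:ℝ) := by exact_mod_cast hT
  have ht1 : (1:ℝ) < (T:ℝ) := by linarith
  have hlog : 0 < Real.log T := Real.log_pos ht1
  have hL : 0 < Real.log (4 * (T:ℝ)) := Real.log_pos (by linarith)
  set a : ℝ := σ * T * Real.sqrt (6 * Real.log (4 * (T:ℝ))) / (ε * Real.sqrt ε) with ha_def
  have ha : 0 < a := by positivity
  have hterm : ∀ n : ℕ, 1 ≤ n →
      σ * (T:ℝ) * Real.sqrt (6 * Real.log (4 * (T:ℝ)) / (ε * (n:ℝ)) ^ 3)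
        = a * ((n:ℝ) * Real.sqrt n)⁻¹ := by
    intro n hn
    have hn0 : (0:ℝ) < n := by exact_mod_cast hn
    have hsq : Real.sqrt ((ε * n) ^ 3) = ε * Real.sqrt ε * ((n:ℝ) * Real.sqrt n) := by
      rw [pow_succ, Real.sqrt_mul (by positivity), Real.sqrt_sq (by positivity),
        Real.sqrt_mul hε0.le]
      ring
    rw [Real.sqrt_div' _ (by positivity), hsq]
    rw [ha_def]; field_simp
  set b : ℝ := a ^ ((2:ℝ)/3) with hb_def
  have hb : 0 < b := by positivity
  set N : ℕ := ⌈b⌉₊ with hN_def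
  have hN1 : 1 ≤ N := Nat.one_le_iff_ne_zero.mpr (Nat.ceil_pos.mpr hb).ne'
  set M : ℕ := max N T with hM_def
  have hNM : N ≤ M := le_max_left _ _
  have hTM : T ≤ M := le_max_right _ _
  -- function g
  set g : ℕ → ℝ := fun n => if n ≤ N then (1:ℝ) else a * ((n:ℝ) * Real.sqrt n)⁻¹ with hg_def
  have hg_nonneg : ∀ n, 0 ≤ g n := by
    intro n
    simp only [hg_def]
    split <;> positivity
  -- step 1: pointwise bound
  have step1 : (∑ n ∈ Finset.Icc 1 T,
      2 * min (σ * (T:ℝ) * Real.sqrt (6 * Real.log (4 * (T:ℝ)) / (ε * (n:ℝ)) ^ 3)) 1)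
      ≤ ∑ n ∈ Finset.Icc 1 T, 2 * g n := by
    refine Finset.sum_le_sum ?_
    intro n hn
    have hn1 : 1 ≤ n := (Finset.mem_Icc.mp hn).1
    rw [hterm n hn1]
    gcongr 2 * ?_
    simp only [hg_def]
    split
    · exact min_le_right _ _
    · exact min_le_left _ _
  -- step 2: extend to M
  have step2 : (∑ n ∈ Finset.Icc 1 T, 2 * g n) ≤ ∑ n ∈ Finset.Icc 1 M, 2 * g n := by
    refine Finset.sum_le_sum_of_subset_of_nonneg (Finset.Icc_subset_Icc_right hTM) ?_
    intro n _ _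
    have := hg_nonneg n
    positivity
  -- step 3: split
  have hIcc : ∀ m : ℕ, Finset.Icc 1 m = Finset.Ioc 0 m := by
    intro m; rfl
  have step3 : (∑ n ∈ Finset.Icc 1 M, 2 * g n)
      = (∑ n ∈ Finset.Ioc 0 N, 2 * g n) + ∑ n ∈ Finset.Ioc N M, 2 * g n := by
    rw [hIcc, ← Finset.sum_Ioc_consecutive _ (Nat.zero_le N) hNM]
  have step4 : (∑ n ∈ Finset.Ioc 0 N, 2 * g n) = 2 * N := by
    have hc : ∀ n ∈ Finset.Ioc 0 N, 2 * g n = 2 := by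
      intro n hn
      have := Finset.mem_Ioc.mp hn
      simp only [hg_def]
      rw [if_pos this.2]; norm_num
    rw [Finset.sum_congr rfl hc, Finset.sum_const, Nat.card_Ioc]
    simp [mul_comm]
  have step5 : (∑ n ∈ Finset.Ioc N M, 2 * g n) ≤ 2 * a * (2 / Real.sqrt N) := by
    have heq : (∑ n ∈ Finset.Ioc N M, 2 * g n)
        = 2 * a * ∑ n ∈ Finset.Ioc N M, ((n:ℝ) * Real.sqrt n)⁻¹ := by
      rw [Finset.mul_sum]
      refine Finset.sum_congr rfl (fun n hn => ?_)
      have := Finset.mem_Ioc.mp hn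
      simp only [hg_def]
      rw [if_neg (by omega)]
      ring
    rw [heq]
    have htel := telescope N hN1 M hNM
    have hsM : 0 < Real.sqrt M := Real.sqrt_pos.mpr (by positivity)
    have : (∑ n ∈ Finset.Ioc N M, ((n:ℝ) * Real.sqrt n)⁻¹) ≤ 2 / Real.sqrt N := by
      refine htel.trans ?_
      have : 0 ≤ 2 / Real.sqrt M := by positivity
      linarith
    gcongr
  -- N bound
  have hNb : (N:ℝ) ≤ b + 1 := (Nat.ceil_lt_add_one hb.le).le
  -- a / sqrt N ≤ b
  have hstep6 : 2 * a * (2 / Real.sqrt N) ≤ 4 * b := by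
    have h13 : a ^ ((1:ℝ)/3) ≤ Real.sqrt N := by
      have hbN : b ≤ (N:ℝ) := Nat.le_ceil b
      have : Real.sqrt b ≤ Real.sqrt N := Real.sqrt_le_sqrt hbN
      refine le_trans (le_of_eq ?_) this
      rw [Real.sqrt_eq_rpow, hb_def, ← Real.rpow_mul ha.le]
      norm_num
    have h13pos : 0 < a ^ ((1:ℝ)/3) := by positivity
    have : 2 / Real.sqrt N ≤ 2 / a ^ ((1:ℝ)/3) := by gcongr
    have hdd : a / a ^ ((1:ℝ)/3) = b := by
      rw [hb_def, div_eq_iff h13pos.ne', ← Real.rpow_add ha]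
      norm_num
    have hdiv : 2 * a * (2 / a ^ ((1:ℝ)/3)) = 4 * b := by
      rw [← hdd]; ring
    calc 2 * a * (2 / Real.sqrt N) ≤ 2 * a * (2 / a ^ ((1:ℝ)/3)) := by gcongr
      _ = 4 * b := hdiv
  -- b bound
  have hbK : b ≤ K * (T:ℝ) ^ ((2:ℝ)/3) * Real.log T ^ ((1:ℝ)/3) := by
    have h2T : Real.log 2 ≤ Real.log T := Real.log_le_log (by norm_num) ht
    have hlog4 : Real.log (4 * (T:ℝ)) ≤ 3 * Real.log T := by
      rw [Real.log_mul (by norm_num) (by positivity)]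
      have h4 : Real.log 4 = 2 * Real.log 2 := by
        rw [show (4:ℝ) = 2^2 by norm_num, Real.log_pow]; push_cast; ring
      linarith
    have ha' : a ≤ σ * T * Real.sqrt (18 * Real.log T) / (ε * Real.sqrt ε) := by
      rw [ha_def]
      gcongr σ * (T:ℝ) * ?_ / (ε * Real.sqrt ε)
      exact Real.sqrt_le_sqrt (by linarith)
    have hb' : b ≤ (σ * T * Real.sqrt (18 * Real.log T) / (ε * Real.sqrt ε)) ^ ((2:ℝ)/3) :=
      Real.rpow_le_rpow ha.le ha' (by norm_num)
    refine hb'.trans (le_of_eq ?_)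
    have hv : ε * Real.sqrt ε = ε ^ ((3:ℝ)/2) := by
      rw [Real.sqrt_eq_rpow, show (3:ℝ)/2 = 1 + 1/2 by norm_num, Real.rpow_add hε0,
        Real.rpow_one]
    rw [hv, Real.div_rpow (by positivity) (by positivity),
        Real.mul_rpow (by positivity) (by positivity),
        Real.mul_rpow (by positivity) (by positivity),
        Real.sqrt_eq_rpow, ← Real.rpow_mul (by positivity : (0:ℝ) ≤ 18 * Real.log T),
        ← Real.rpow_mul hε0.le]
    norm_num
    rw [Real.mul_rpow (by norm_num) hlog.le, hK_def]
    ring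
  -- final small-term bound
  have hsmall : (2:ℝ) ≤ 4 * ((T:ℝ) ^ ((2:ℝ)/3) * Real.log T ^ ((1:ℝ)/3)) := by
    have h1 : (1:ℝ) ≤ (T:ℝ) ^ ((2:ℝ)/3) := Real.one_le_rpow (by linarith) (by norm_num)
    have h2 : (1:ℝ)/2 ≤ Real.log T ^ ((1:ℝ)/3) := by
      have hl2 : (1:ℝ)/2 ≤ Real.log T := by
        have := Real.log_two_gt_d9
        have hmono : Real.log 2 ≤ Real.log T := Real.log_le_log (by norm_num) ht
        linarith
      have haq : ((1:ℝ)/2) ^ ((1:ℝ)/3) ≤ Real.log T ^ ((1:ℝ)/3) :=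
        Real.rpow_le_rpow (by norm_num) hl2 (by norm_num)
      have hbq : (1:ℝ)/2 ≤ ((1:ℝ)/2) ^ ((1:ℝ)/3) := by
        nth_rewrite 1 [show ((1:ℝ)/2) = ((1:ℝ)/2) ^ ((1:ℝ)) from (Real.rpow_one _).symm]
        exact Real.rpow_le_rpow_of_exponent_ge (by norm_num) (by norm_num) (by norm_num)
      linarith
    nlinarith [h1, h2]
  calc (∑ n ∈ Finset.Icc 1 T,
      2 * min (σ * (T:ℝ) * Real.sqrt (6 * Real.log (4 * (T:ℝ)) / (ε * (n:ℝ)) ^ 3)) 1)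
      ≤ (∑ n ∈ Finset.Ioc 0 N, 2 * g n) + ∑ n ∈ Finset.Ioc N M, 2 * g n := by
        rw [← step3]; exact step1.trans step2
    _ ≤ 2 * N + 2 * a * (2 / Real.sqrt N) := by rw [step4]; linarith [step5]
    _ ≤ 2 * (b + 1) + 4 * b := by linarith [hstep6, hNb]
    _ = 6 * b + 2 := by ring
    _ ≤ 6 * (K * (T:ℝ) ^ ((2:ℝ)/3) * Real.log T ^ ((1:ℝ)/3))
        + 4 * ((T:ℝ) ^ ((2:ℝ)/3) * Real.log T ^ ((1:ℝ)/3)) := by linarith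
    _ = (6 * K + 4) * (T:ℝ) ^ ((2:ℝ)/3) * Real.log T ^ ((1:ℝ)/3) := by ring
end
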